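/- arXiv:2106.14312 — 7 statements merged into one kernel-verified Lean document; each statement's English description precedes it below -/
import Mathlib

section
/- Let b be a natural number and let v : Fin (3b+1) → ℝ be a family of real values, and let H ⊆ Fin (3b+1) be a subset of indices with |H| ≥ 2b+1 (the 'honest' indices). Form the trimmed mean of v: sort the 3b+1 values in nondecreasing order, discard the smallest b values and the largest b values, and take the arithmetic mean of the remaining b+1 values. Then the trimmed mean lies in the closed interval [min_{i ∈ H} v i, max_{i ∈ H} v i]. -/
/-- The trimmed mean of `3b+1` real values with trimming parameter `b`:
sort the values in nondecreasing order, discard the smallest `b` and the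
largest `b` values, and take the arithmetic mean of the remaining `b+1`
values. -/
noncomputable def trimmedMean (b : ℕ) (v : Fin (3 * b + 1) → ℝ) : ℝ :=
  (∑ k ∈ Finset.univ.filter (fun k : Fin (3 * b + 1) => b ≤ k.val ∧ k.val ≤ 2 * b),
      (v ∘ Tuple.sort v) k) / (b + 1)

lemma trimmed_inter_nonempty {n : ℕ} (A B : Finset (Fin n)) (h : n < A.card + B.card) :
    (A ∩ B).Nonempty := by
  rw [← Finset.card_pos]
  have h1 := Finset.card_inter_add_card_union A B
  have h2 : (A ∪ B).card ≤ n := by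
    simpa using Finset.card_le_card (Finset.subset_univ (A ∪ B))
  omega

theorem trimmedMean_mem_Icc_honest (b : ℕ) (v : Fin (3 * b + 1) → ℝ)
    (H : Finset (Fin (3 * b + 1))) (hH : 2 * b + 1 ≤ H.card) :
    trimmedMean b v ∈
      Set.Icc (H.inf' (Finset.card_pos.mp (by omega)) v)
        (H.sup' (Finset.card_pos.mp (by omega)) v) := by
  set σ := Tuple.sort v with hσ
  set w := v ∘ σ with hw
  have hmono : Monotone w := Tuple.monotone_sort v
  have hHne : H.Nonempty := Finset.card_pos.mp (by omega)
  set s := Finset.univ.filter (fun k : Fin (3 * b + 1) => b ≤ k.val ∧ k.val ≤ 2 * b) with hs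
  -- per-element bounds
  have hlow : ∀ k ∈ s, H.inf' hHne v ≤ w k := by
    intro k hk
    rw [hs, Finset.mem_filter] at hk
    obtain ⟨-, hkb, -⟩ := hk
    have hne : ((Finset.Iic k).image σ ∩ H).Nonempty := by
      apply trimmed_inter_nonempty
      rw [Finset.card_image_of_injective _ σ.injective]
      have : (Finset.Iic k).card = k.val + 1 := by
        simp [Fin.card_Iic]
      omega
    obtain ⟨h, hh⟩ := hne
    rw [Finset.mem_inter, Finset.mem_image] at hh
    obtain ⟨⟨j, hj, hjh⟩, hhH⟩ := hh
    calc H.inf' hHne v ≤ v h := Finset.inf'_le v hhH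
      _ = w j := by rw [← hjh]; rfl
      _ ≤ w k := hmono (Finset.mem_Iic.mp hj)
  have hhigh : ∀ k ∈ s, w k ≤ H.sup' hHne v := by
    intro k hk
    rw [hs, Finset.mem_filter] at hk
    obtain ⟨-, -, hkb⟩ := hk
    have hne : ((Finset.Ici k).image σ ∩ H).Nonempty := by
      apply trimmed_inter_nonempty
      rw [Finset.card_image_of_injective _ σ.injective]
      have : (Finset.Ici k).card = 3 * b + 1 - k.val := by
        simp [Fin.card_Ici]
      omega
    obtain ⟨h, hh⟩ := hne
    rw [Finset.mem_inter, Finset.mem_image] at hh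
    obtain ⟨⟨j, hj, hjh⟩, hhH⟩ := hh
    calc w k ≤ w j := hmono (Finset.mem_Ici.mp hj)
      _ = v h := by rw [← hjh]; rfl
      _ ≤ H.sup' hHne v := Finset.le_sup' v hhH
  -- cardinality of s
  have hcard : s.card = b + 1 := by
    have : s = Finset.Icc (⟨b, by omega⟩ : Fin (3 * b + 1)) ⟨2 * b, by omega⟩ := by
      ext k
      simp [hs, Finset.mem_Icc, Fin.le_def]
    rw [this, Fin.card_Icc]; simp; omega
  have hb1 : (0:ℝ) < (b:ℝ) + 1 := by positivity
  have hsum_lo : (H.inf' hHne v) * ((b:ℝ) + 1) ≤ ∑ k ∈ s, w k := by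
    have := Finset.card_nsmul_le_sum s w (H.inf' hHne v) hlow
    rw [hcard] at this
    simpa [nsmul_eq_mul, mul_comm] using this
  have hsum_hi : ∑ k ∈ s, w k ≤ (H.sup' hHne v) * ((b:ℝ) + 1) := by
    have := Finset.sum_le_card_nsmul s w (H.sup' hHne v) hhigh
    rw [hcard] at this
    simpa [nsmul_eq_mul, mul_comm] using this
  constructor
  · rw [trimmedMean, le_div_iff₀ hb1]
    exact hsum_lo
  · rw [trimmedMean, div_le_iff₀ hb1]
    exact hsum_hi
end

section
/- Consider a dynamics on 2b+1 honest states x : ℕ → Fin (2b+1) → ℝ in which, at each step t, each honest state x(t+1)(i) is the trimmed mean of some family of 3b+1 real values that contains all 2b+1 honest values x(t)(0), …, x(t)(2b) (with the remaining b values arbitrary, possibly depending on i and t). Then the honest interval is nested over time: for all t, min_i x(t+1)(i) ≥ min_i x(t)(i) and max_i x(t+1)(i) ≤ max_i x(t)(i); consequently, every honest state at every time t lies in the convex hull [min_i x(0)(i), max_i x(0)(i)] of the initial honest states. -/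
open Finset in
lemma card_filter_perm {n : ℕ} (σ : Equiv.Perm (Fin n)) (p : Fin n → Prop) [DecidablePred p] :
    (univ.filter fun j => p (σ j)).card = (univ.filter p).card := by
  apply Finset.card_bij (fun j _ => σ j)
  · intro j hj; simp_all
  · intro a ha a' ha' h; exact σ.injective h
  · intro i hi; exact ⟨σ.symm i, by simp_all⟩

open Finset in
lemma trimmedMean_mem_Icc (b : ℕ) (v : Fin (3 * b + 1) → ℝ)
    (f : Fin (2 * b + 1) → Fin (3 * b + 1)) (hf : Function.Injective f)
    (m M : ℝ) (h : ∀ j, v (f j) ∈ Set.Icc m M) :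
    trimmedMean b v ∈ Set.Icc m M := by
  set σ := Tuple.sort v with hσ
  have hmono : Monotone (v ∘ σ) := Tuple.monotone_sort v
  -- few values below m
  have hA : (univ.filter fun i => v i < m).card ≤ b := by
    have hsub : Finset.image f univ ⊆ univ.filter fun i => m ≤ v i := by
      intro i hi
      simp only [Finset.mem_image] at hi
      obtain ⟨j, _, rfl⟩ := hi
      exact mem_filter.2 ⟨mem_univ _, (h j).1⟩
    have h1 : 2 * b + 1 ≤ (univ.filter fun i => m ≤ v i).card := by
      have := Finset.card_le_card hsub
      rwa [Finset.card_image_of_injective _ hf, Finset.card_univ, Fintype.card_fin] at this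
    have h2 := Finset.card_filter_add_card_filter_not
      (s := (univ : Finset (Fin (3 * b + 1)))) (p := fun i => m ≤ v i)
    simp only [Finset.card_univ, Fintype.card_fin, not_le] at h2
    omega
  have hB : (univ.filter fun i => M < v i).card ≤ b := by
    have hsub : Finset.image f univ ⊆ univ.filter fun i => v i ≤ M := by
      intro i hi
      simp only [Finset.mem_image] at hi
      obtain ⟨j, _, rfl⟩ := hi
      exact mem_filter.2 ⟨mem_univ _, (h j).2⟩
    have h1 : 2 * b + 1 ≤ (univ.filter fun i => v i ≤ M).card := by
      have := Finset.card_le_card hsub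
      rwa [Finset.card_image_of_injective _ hf, Finset.card_univ, Fintype.card_fin] at this
    have h2 := Finset.card_filter_add_card_filter_not
      (s := (univ : Finset (Fin (3 * b + 1)))) (p := fun i => v i ≤ M)
    simp only [Finset.card_univ, Fintype.card_fin, not_le] at h2
    omega
  have hlow : ∀ k : Fin (3 * b + 1), b ≤ k.val → m ≤ (v ∘ σ) k := by
    intro k hk
    by_contra h'
    push_neg at h'
    have hsub : Finset.Iic k ⊆ univ.filter fun j => v (σ j) < m := by
      intro j hj
      exact mem_filter.2 ⟨mem_univ _, lt_of_le_of_lt (hmono (Finset.mem_Iic.1 hj)) h'⟩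
    have hcard := Finset.card_le_card hsub
    rw [Fin.card_Iic, card_filter_perm σ (fun i => v i < m)] at hcard
    omega
  have hhigh : ∀ k : Fin (3 * b + 1), k.val ≤ 2 * b → (v ∘ σ) k ≤ M := by
    intro k hk
    by_contra h'
    push_neg at h'
    have hsub : Finset.Ici k ⊆ univ.filter fun j => M < v (σ j) := by
      intro j hj
      exact mem_filter.2 ⟨mem_univ _, lt_of_lt_of_le h' (hmono (Finset.mem_Ici.1 hj))⟩
    have hcard := Finset.card_le_card hsub
    rw [Fin.card_Ici, card_filter_perm σ (fun i => M < v i)] at hcard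
    omega
  -- cardinality of the middle block
  have hmid : (univ.filter fun k : Fin (3 * b + 1) => b ≤ k.val ∧ k.val ≤ 2 * b).card
      = b + 1 := by
    have : (univ.filter fun k : Fin (3 * b + 1) => b ≤ k.val ∧ k.val ≤ 2 * b)
        = Finset.Icc (⟨b, by omega⟩ : Fin (3 * b + 1)) ⟨2 * b, by omega⟩ := by
      ext k
      simp [Finset.mem_Icc, Fin.le_def]
    rw [this, Fin.card_Icc]
    simp only [Fin.val_mk]
    omega
  set s := univ.filter fun k : Fin (3 * b + 1) => b ≤ k.val ∧ k.val ≤ 2 * b with hs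
  have hsumlo : (b + 1 : ℝ) * m ≤ ∑ k ∈ s, (v ∘ σ) k := by
    have := Finset.card_nsmul_le_sum s (v ∘ σ) m
      (fun k hk => hlow k (mem_filter.1 hk).2.1)
    rw [hmid] at this
    simpa [nsmul_eq_mul, add_comm] using this
  have hsumhi : ∑ k ∈ s, (v ∘ σ) k ≤ (b + 1 : ℝ) * M := by
    have := Finset.sum_le_card_nsmul s (v ∘ σ) M
      (fun k hk => hhigh k (mem_filter.1 hk).2.2)
    rw [hmid] at this
    simpa [nsmul_eq_mul, add_comm] using this
  have hb : (0 : ℝ) < b + 1 := by positivity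
  constructor
  · rw [trimmedMean, le_div_iff₀ hb]
    linarith
  · rw [trimmedMean, div_le_iff₀ hb]
    linarith

theorem iterated_trimmedMean_validity (b : ℕ) (x : ℕ → Fin (2 * b + 1) → ℝ)
    (hupd : ∀ t i, ∃ (v : Fin (3 * b + 1) → ℝ) (f : Fin (2 * b + 1) → Fin (3 * b + 1)),
      Function.Injective f ∧ (∀ j, v (f j) = x t j) ∧ x (t + 1) i = trimmedMean b v) :
    (∀ t, (⨅ i, x t i) ≤ (⨅ i, x (t + 1) i) ∧ (⨆ i, x (t + 1) i) ≤ (⨆ i, x t i)) ∧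
    (∀ t i, x t i ∈ Set.Icc (⨅ i, x 0 i) (⨆ i, x 0 i)) := by
  haveI : Nonempty (Fin (2 * b + 1)) := ⟨⟨0, by omega⟩⟩
  have key : ∀ t i, x (t + 1) i ∈ Set.Icc (⨅ i, x t i) (⨆ i, x t i) := by
    intro t i
    obtain ⟨v, f, hf, hv, hx⟩ := hupd t i
    rw [hx]
    apply trimmedMean_mem_Icc b v f hf
    intro j
    rw [hv j]
    exact ⟨ciInf_le (Set.Finite.bddBelow (Set.finite_range _)) j,
      le_ciSup (Set.Finite.bddAbove (Set.finite_range _)) j⟩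
  have step : ∀ t, (⨅ i, x t i) ≤ (⨅ i, x (t + 1) i) ∧ (⨆ i, x (t + 1) i) ≤ (⨆ i, x t i) := by
    intro t
    exact ⟨le_ciInf fun i => (key t i).1, ciSup_le fun i => (key t i).2⟩
  refine ⟨step, ?_⟩
  intro t
  induction t with
  | zero =>
    intro i
    exact ⟨ciInf_le (Set.Finite.bddBelow (Set.finite_range _)) i,
      le_ciSup (Set.Finite.bddAbove (Set.finite_range _)) i⟩
  | succ n ih =>
    intro i
    have h1 := (key n i).1
    have h2 := (key n i).2
    have hi1 : (⨅ j, x 0 j) ≤ ⨅ j, x n j := le_ciInf fun j => (ih j).1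
    have hi2 : (⨆ j, x n j) ≤ ⨆ j, x 0 j := ciSup_le fun j => (ih j).2
    exact ⟨le_trans hi1 h1, le_trans h2 hi2⟩
end

section
/- Let n be a natural number and let G be a directed graph without self-loops on a vertex set of size 2n+1 in which every vertex has in-degree at least n (i.e., G is obtained from the complete directed graph on 2n+1 vertices by removing at most n incoming edges from each vertex). Then G contains a source component: there exists a vertex v₀ such that for every other vertex w there is a directed path in G from v₀ to w. -/
/-- Source component lemma: a loopless directed graph on `2n+1` vertices in which
every vertex has in-degree at least `n` has a vertex with a directed path to
every other vertex. -/
theorem reduced_graph_has_source_component (n : ℕ)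
    (A : Fin (2 * n + 1) → Fin (2 * n + 1) → Prop) [DecidableRel A]
    (hirr : ∀ v, ¬ A v v)
    (hindeg : ∀ v : Fin (2 * n + 1), n ≤ (Finset.univ.filter (fun u => A u v)).card) :
    ∃ v₀ : Fin (2 * n + 1), ∀ w : Fin (2 * n + 1), w ≠ v₀ →
      Relation.ReflTransGen A v₀ w := by
  classical
  obtain ⟨v₀, -, hmax⟩ := Finset.exists_max_image (Finset.univ : Finset (Fin (2 * n + 1)))
    (fun v => (Finset.univ.filter (fun u => Relation.ReflTransGen A v u)).card)
    ⟨0, Finset.mem_univ _⟩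
  set F := Finset.univ.filter (fun u => Relation.ReflTransGen A v₀ u) with hF
  by_cases hall : ∀ w, w ∈ F
  · refine ⟨v₀, fun w _ => ?_⟩
    have := hall w
    simpa [hF] using this
  push_neg at hall
  obtain ⟨c, hc⟩ := hall
  exfalso
  set C := Finset.univ \ F with hC
  have hclosed : ∀ c' ∈ C, ∀ u, A u c' → u ∈ C := by
    intro c' hc' u hu
    simp only [hC, hF, Finset.mem_sdiff, Finset.mem_univ, Finset.mem_filter, true_and] at hc' ⊢
    intro hr
    exact hc' (hr.tail hu)
  have hcC : c ∈ C := by simp [hC, hc]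
  have hCpos : 0 < C.card := Finset.card_pos.mpr ⟨c, hcC⟩
  have h1 : n + 1 ≤ C.card := by
    have hsub : Finset.univ.filter (fun u => A u c) ⊆ C.erase c := by
      intro u hu
      simp only [Finset.mem_filter, Finset.mem_univ, true_and] at hu
      refine Finset.mem_erase.mpr ⟨?_, hclosed c hcC u hu⟩
      rintro rfl; exact hirr _ hu
    have h2 := Finset.card_le_card hsub
    have h3 := hindeg c
    have h4 := Finset.card_erase_of_mem hcC
    omega
  have hcard : C.card = (2 * n + 1) - F.card := by
    rw [hC, Finset.card_sdiff_of_subset (Finset.subset_univ F)]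
    simp
  have hFle : F.card ≤ n := by omega
  -- in-neighbors of v₀ lie in F
  have hin : Finset.univ.filter (fun u => A u v₀) ⊆ F.erase v₀ := by
    intro u hu
    simp only [Finset.mem_filter, Finset.mem_univ, true_and] at hu
    refine Finset.mem_erase.mpr ⟨fun h => hirr v₀ (h ▸ hu), ?_⟩
    by_contra huF
    have hsub : F ⊆ Finset.univ.filter (fun w => Relation.ReflTransGen A u w) := by
      intro w hw
      simp only [hF, Finset.mem_filter, Finset.mem_univ, true_and] at hw ⊢
      exact Relation.ReflTransGen.trans (Relation.ReflTransGen.single hu) hw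
    have huF' : u ∈ Finset.univ.filter (fun w => Relation.ReflTransGen A u w) :=
      Finset.mem_filter.mpr ⟨Finset.mem_univ _, Relation.ReflTransGen.refl⟩
    have hlt : F.card < (Finset.univ.filter (fun w => Relation.ReflTransGen A u w)).card :=
      Finset.card_lt_card ((Finset.ssubset_iff_of_subset hsub).mpr ⟨u, huF', huF⟩)
    have := hmax u (Finset.mem_univ u)
    omega
  have hv₀F : v₀ ∈ F :=
    Finset.mem_filter.mpr ⟨Finset.mem_univ _, Relation.ReflTransGen.refl⟩
  have h5 := Finset.card_le_card hin
  have h6 := Finset.card_erase_of_mem hv₀F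
  have h7 := hindeg v₀
  have h8 : 0 < F.card := Finset.card_pos.mpr ⟨v₀, hv₀F⟩
  omega
end

section
/- Let n and N be natural numbers with N ≥ 2n+1, and let G be a directed graph without self-loops on a vertex set of size N in which every vertex has in-degree at least N − 1 − n (i.e., G is obtained from the complete directed graph on N vertices by removing at most n incoming edges from each vertex). Then there exists a vertex v₀ such that for every other vertex w there is a directed path in G from v₀ to w. -/
/-- Generalized source component lemma: a loopless directed graph on `N ≥ 2n+1`
vertices in which every vertex has in-degree at least `N - 1 - n` has a vertex
with a directed path to every other vertex. -/
theorem reduced_graph_has_source_component_general (n N : ℕ) (hN : 2 * n + 1 ≤ N)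
    (A : Fin N → Fin N → Prop) [DecidableRel A]
    (hirr : ∀ v, ¬ A v v)
    (hindeg : ∀ v : Fin N, N - 1 - n ≤ (Finset.univ.filter (fun u => A u v)).card) :
    ∃ v₀ : Fin N, ∀ w : Fin N, w ≠ v₀ → Relation.ReflTransGen A v₀ w := by
  classical
  have hNpos : 0 < N := by omega
  obtain ⟨v₀, -, hmax⟩ := Finset.exists_max_image (Finset.univ : Finset (Fin N))
      (fun v => (Finset.univ.filter (fun w => Relation.ReflTransGen A v w)).card)
      ⟨⟨0, hNpos⟩, Finset.mem_univ _⟩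
  set R := Finset.univ.filter (fun w => Relation.ReflTransGen A v₀ w) with hR
  have hv₀R : v₀ ∈ R := Finset.mem_filter.mpr ⟨Finset.mem_univ _, Relation.ReflTransGen.refl⟩
  refine ⟨v₀, ?_⟩
  by_contra hcon
  push_neg at hcon
  obtain ⟨w, hwne, hw⟩ := hcon
  have hwR : w ∉ R := by simp [hR, hw]
  -- in-neighbors of w avoid R and w itself
  have h1 : (Finset.univ.filter (fun u => A u w)) ⊆ (Finset.univ \ R).erase w := by
    intro u hu
    simp only [Finset.mem_filter, Finset.mem_univ, true_and] at hu
    have huR : u ∉ R := by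
      intro huR
      apply hwR
      simp only [hR, Finset.mem_filter, Finset.mem_univ, true_and] at huR ⊢
      exact huR.tail hu
    refine Finset.mem_erase.mpr ⟨?_, Finset.mem_sdiff.mpr ⟨Finset.mem_univ _, huR⟩⟩
    rintro rfl
    exact hirr _ hu
  -- in-neighbors of v₀ lie in R (minus v₀), by maximality
  have h2 : (Finset.univ.filter (fun u => A u v₀)) ⊆ R.erase v₀ := by
    intro u hu
    simp only [Finset.mem_filter, Finset.mem_univ, true_and] at hu
    have huv : u ≠ v₀ := by rintro rfl; exact hirr _ hu
    refine Finset.mem_erase.mpr ⟨huv, ?_⟩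
    by_contra huR
    have hsub : R ⊆ Finset.univ.filter (fun w => Relation.ReflTransGen A u w) := by
      intro x hx
      simp only [hR, Finset.mem_filter, Finset.mem_univ, true_and] at hx ⊢
      exact Relation.ReflTransGen.head hu hx
    have huRu : u ∈ Finset.univ.filter (fun w => Relation.ReflTransGen A u w) :=
      Finset.mem_filter.mpr ⟨Finset.mem_univ _, Relation.ReflTransGen.refl⟩
    have hlt : R.card < (Finset.univ.filter
        (fun w => Relation.ReflTransGen A u w)).card :=
      Finset.card_lt_card (Finset.ssubset_iff_of_subset hsub |>.mpr ⟨u, huRu, huR⟩)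
    exact absurd (hmax u (Finset.mem_univ u)) (by omega)
  have hc1 := (Finset.card_le_card h1).trans_eq' rfl
  have hc2 := Finset.card_le_card h2
  have hd1 := hindeg w
  have hd2 := hindeg v₀
  have hcard1 : ((Finset.univ \ R).erase w).card = N - R.card - 1 := by
    rw [Finset.card_erase_of_mem (Finset.mem_sdiff.mpr ⟨Finset.mem_univ _, hwR⟩),
      Finset.card_sdiff_of_subset (Finset.subset_univ R), Finset.card_univ, Fintype.card_fin]
  have hcard2 : (R.erase v₀).card = R.card - 1 := Finset.card_erase_of_mem hv₀R
  have hRle : R.card ≤ N := by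
    simpa using Finset.card_le_card (Finset.subset_univ R)
  have hRpos : 0 < R.card := Finset.card_pos.mpr ⟨v₀, hv₀R⟩
  omega
end

section
/- Let n be a natural number and let G be a directed graph without self-loops on a vertex set of size 2n+1 in which every vertex has in-degree at least n. Let v₀ be a vertex whose set S of out-neighbors satisfies |S| ≥ n. Then every vertex w with w ≠ v₀ and w ∉ S has an in-neighbor in S ∪ {v₀}; consequently, v₀ reaches every other vertex of G by a directed path of length at most 2. -/
/-- In a loopless directed graph on `2n+1` vertices with all in-degrees at least
`n`, if `v₀` has at least `n` out-neighbors (forming the set `S`), then every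
vertex other than `v₀` and outside `S` has an in-neighbor in `S ∪ {v₀}`;
consequently `v₀` reaches every other vertex by a directed path of length at
most 2. -/
theorem source_reaches_in_two_steps (n : ℕ)
    (A : Fin (2 * n + 1) → Fin (2 * n + 1) → Prop) [DecidableRel A]
    (hirr : ∀ v, ¬ A v v)
    (hindeg : ∀ v : Fin (2 * n + 1), n ≤ (Finset.univ.filter (fun u => A u v)).card)
    (v₀ : Fin (2 * n + 1))
    (hS : n ≤ (Finset.univ.filter (fun w => A v₀ w)).card) :
    (∀ w : Fin (2 * n + 1), w ≠ v₀ → w ∉ Finset.univ.filter (fun w => A v₀ w) →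
      ∃ u ∈ (Finset.univ.filter (fun w => A v₀ w)) ∪ {v₀}, A u w) ∧
    (∀ w : Fin (2 * n + 1), w ≠ v₀ → A v₀ w ∨ ∃ u, A v₀ u ∧ A u w) := by
  have hv₀S : v₀ ∉ Finset.univ.filter (fun w => A v₀ w) := by simp [hirr v₀]
  have key : ∀ w : Fin (2 * n + 1), w ≠ v₀ →
      w ∉ Finset.univ.filter (fun w => A v₀ w) →
      ∃ u ∈ (Finset.univ.filter (fun w => A v₀ w)) ∪ {v₀}, A u w := by
    intro w hwv hwS
    by_contra h
    push_neg at h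
    have hsub : Finset.univ.filter (fun u => A u w) ⊆
        (Finset.univ : Finset (Fin (2 * n + 1))) \
          (insert w (insert v₀ (Finset.univ.filter (fun x => A v₀ x)))) := by
      intro u hu
      simp only [Finset.mem_filter, Finset.mem_univ, true_and] at hu
      simp only [Finset.mem_sdiff, Finset.mem_univ, true_and, Finset.mem_insert,
        Finset.mem_filter]
      push_neg
      refine ⟨?_, ?_, ?_⟩
      · rintro rfl; exact hirr u hu
      · intro he; exact h u (by simp [he]) hu
      · intro hA; exact h u (by simp [hA]) hu
    have hcard : (insert w (insert v₀ (Finset.univ.filter (fun x => A v₀ x)))).card =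
        (Finset.univ.filter (fun x => A v₀ x)).card + 2 := by
      rw [Finset.card_insert_of_notMem, Finset.card_insert_of_notMem hv₀S]
      simp only [Finset.mem_insert]
      push_neg
      exact ⟨hwv, hwS⟩
    have h1 := Finset.card_le_card hsub
    have h2 := hindeg w
    rw [Finset.card_sdiff_of_subset (by simp), hcard] at h1
    simp only [Finset.card_univ, Fintype.card_fin] at h1
    omega
  refine ⟨key, ?_⟩
  intro w hwv
  by_cases hwS : w ∈ Finset.univ.filter (fun w => A v₀ w)
  · left; simpa using hwS
  · obtain ⟨u, hu, hAuw⟩ := key w hwv hwS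
    rcases Finset.mem_union.1 hu with huS | huv
    · right; exact ⟨u, by simpa using huS, hAuw⟩
    · left; simp only [Finset.mem_singleton] at huv; subst huv; exact hAuw
end

section
/- Let b be a natural number and set h = 2b+1. Let A and B be h×h real matrices with nonnegative entries such that every row of A has at least b+1 strictly positive entries and some column j of B has at least b+1 strictly positive entries. Then every entry of column j of the product A·B is strictly positive; in particular A·B is a scrambling matrix. -/
open Classical in
/-- If every row of the nonnegative `(2b+1)×(2b+1)` matrix `A` has at least `b+1`
positive entries and column `j` of the nonnegative matrix `B` has at least `b+1`
positive entries, then every entry of column `j` of `A * B` is positive; in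
particular `A * B` is a scrambling matrix. -/
theorem mul_scrambling_of_rows_and_column (b : ℕ)
    (A B : Matrix (Fin (2 * b + 1)) (Fin (2 * b + 1)) ℝ)
    (hA : ∀ i j, 0 ≤ A i j) (hB : ∀ i j, 0 ≤ B i j)
    (hArow : ∀ i, b + 1 ≤ (Finset.univ.filter (fun j => 0 < A i j)).card)
    (j : Fin (2 * b + 1))
    (hBcol : b + 1 ≤ (Finset.univ.filter (fun i => 0 < B i j)).card) :
    (∀ i, 0 < (A * B) i j) ∧ ∃ c, ∀ i, 0 < (A * B) i c := by
  have key : ∀ i, 0 < (A * B) i j := by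
    intro i
    set S := Finset.univ.filter (fun k => 0 < A i k)
    set T := Finset.univ.filter (fun k => 0 < B k j)
    have hST : (S ∩ T).Nonempty := by
      rw [← Finset.card_pos]
      have h1 := Finset.card_inter_add_card_union S T
      have h2 : (S ∪ T).card ≤ 2 * b + 1 := by
        simpa using Finset.card_le_univ (S ∪ T)
      have hS : b + 1 ≤ S.card := hArow i
      have hT : b + 1 ≤ T.card := hBcol
      omega
    obtain ⟨k, hk⟩ := hST
    simp only [Finset.mem_inter, Finset.mem_filter, S, T] at hk
    rw [Matrix.mul_apply]
    apply Finset.sum_pos'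
    · intro l _
      exact mul_nonneg (hA i l) (hB l j)
    · exact ⟨k, Finset.mem_univ k, mul_pos hk.1.2 hk.2.2⟩
  exact ⟨key, j, key⟩
end

section
/- Let h ≥ 1, let β ∈ (0,1], and let M : ℕ → (h×h real matrices) be a sequence of row-stochastic matrices (all entries nonnegative, each row summing to 1) such that for every k, the product M(3k+2)·M(3k+1)·M(3k) has some column all of whose entries are at least β. Define x : ℕ → ℝ^h by an arbitrary initial vector x(0) and x(t+1) = M(t)·x(t). Then for every t, max_i x(t) i − min_i x(t) i ≤ (1 − β)^{⌊t/3⌋} · (max_i x(0) i − min_i x(0) i); in particular the diameter max_i x(t) i − min_i x(t) i tends to 0 as t → ∞, so all coordinates converge to a common limit. -/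
open Filter

private lemma stoch_bounds {h : ℕ} [Nonempty (Fin h)] (A : Matrix (Fin h) (Fin h) ℝ)
    (hA0 : ∀ i j, 0 ≤ A i j) (hA1 : ∀ i, ∑ j, A i j = 1) (v : Fin h → ℝ) (i : Fin h) :
    (⨅ k, v k) ≤ A.mulVec v i ∧ A.mulVec v i ≤ ⨆ k, v k := by
  have hup : A.mulVec v i ≤ ⨆ k, v k := by
    have : ∑ j, A i j * v j ≤ ∑ j, A i j * (⨆ k, v k) := by
      apply Finset.sum_le_sum
      intro j _
      exact mul_le_mul_of_nonneg_left (le_ciSup (Finite.bddAbove_range v) j) (hA0 i j)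
    simpa [Matrix.mulVec, dotProduct, ← Finset.sum_mul, hA1 i] using this
  have hlo : (⨅ k, v k) ≤ A.mulVec v i := by
    have : ∑ j, A i j * (⨅ k, v k) ≤ ∑ j, A i j * v j := by
      apply Finset.sum_le_sum
      intro j _
      exact mul_le_mul_of_nonneg_left (ciInf_le (Finite.bddBelow_range v) j) (hA0 i j)
    simpa [Matrix.mulVec, dotProduct, ← Finset.sum_mul, hA1 i] using this
  exact ⟨hlo, hup⟩

private lemma scram_contract {h : ℕ} [Nonempty (Fin h)] (β : ℝ) (hβ0 : 0 < β)
    (A : Matrix (Fin h) (Fin h) ℝ)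
    (hA0 : ∀ i j, 0 ≤ A i j) (hA1 : ∀ i, ∑ j, A i j = 1)
    (j : Fin h) (hj : ∀ i, β ≤ A i j) (v : Fin h → ℝ) :
    (⨆ i, A.mulVec v i) - (⨅ i, A.mulVec v i) ≤ (1 - β) * ((⨆ i, v i) - ⨅ i, v i) := by
  set S := ⨆ i, v i with hS
  set I := ⨅ i, v i with hI
  have hvS : ∀ k, v k ≤ S := fun k => le_ciSup (Finite.bddAbove_range v) k
  have hvI : ∀ k, I ≤ v k := fun k => ciInf_le (Finite.bddBelow_range v) k
  have key : ∀ i, A.mulVec v i = S - ∑ k, A i k * (S - v k) := by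
    intro i
    have : ∑ k, A i k * (S - v k) = ∑ k, A i k * S - ∑ k, A i k * v k := by
      rw [← Finset.sum_sub_distrib]; congr 1; ext k; ring
    rw [this]
    simp [Matrix.mulVec, dotProduct, ← Finset.sum_mul, hA1 i]
  have key' : ∀ i, A.mulVec v i = I + ∑ k, A i k * (v k - I) := by
    intro i
    have : ∑ k, A i k * (v k - I) = ∑ k, A i k * v k - ∑ k, A i k * I := by
      rw [← Finset.sum_sub_distrib]; congr 1; ext k; ring
    rw [this]
    simp [Matrix.mulVec, dotProduct, ← Finset.sum_mul, hA1 i]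
  have hup : ∀ i, A.mulVec v i ≤ S - β * (S - v j) := by
    intro i
    rw [key i]
    have h1 : A i j * (S - v j) ≤ ∑ k, A i k * (S - v k) := by
      apply Finset.single_le_sum (f := fun k => A i k * (S - v k))
      · intro k _; exact mul_nonneg (hA0 i k) (sub_nonneg.mpr (hvS k))
      · exact Finset.mem_univ j
    have h2 : β * (S - v j) ≤ A i j * (S - v j) :=
      mul_le_mul_of_nonneg_right (hj i) (sub_nonneg.mpr (hvS j))
    linarith
  have hlo : ∀ i, I + β * (v j - I) ≤ A.mulVec v i := by
    intro i
    rw [key' i]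
    have h1 : A i j * (v j - I) ≤ ∑ k, A i k * (v k - I) := by
      apply Finset.single_le_sum (f := fun k => A i k * (v k - I))
      · intro k _; exact mul_nonneg (hA0 i k) (sub_nonneg.mpr (hvI k))
      · exact Finset.mem_univ j
    have h2 : β * (v j - I) ≤ A i j * (v j - I) :=
      mul_le_mul_of_nonneg_right (hj i) (sub_nonneg.mpr (hvI j))
    linarith
  have hsup : (⨆ i, A.mulVec v i) ≤ S - β * (S - v j) := ciSup_le hup
  have hinf : I + β * (v j - I) ≤ ⨅ i, A.mulVec v i := le_ciInf hlo
  nlinarith [hvS j, hvI j]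

/-- Geometric convergence under scrambling products: if each product of three
consecutive row-stochastic transition matrices has a column bounded below by
`β ∈ (0,1]`, then the diameter of the state vector decays like `(1-β)^⌊t/3⌋`,
hence tends to `0`, and all coordinates converge to a common limit. -/
theorem convergence_of_scrambling_products (h : ℕ) (hh : 1 ≤ h)
    (β : ℝ) (hβ0 : 0 < β) (hβ1 : β ≤ 1)
    (M : ℕ → Matrix (Fin h) (Fin h) ℝ)
    (hnonneg : ∀ t i j, 0 ≤ M t i j) (hrow : ∀ t i, ∑ j, M t i j = 1)
    (hscram : ∀ k : ℕ, ∃ j, ∀ i, β ≤ (M (3 * k + 2) * M (3 * k + 1) * M (3 * k)) i j)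
    (x : ℕ → Fin h → ℝ) (hx : ∀ t, x (t + 1) = (M t).mulVec (x t)) :
    (∀ t, (⨆ i, x t i) - (⨅ i, x t i) ≤
        (1 - β) ^ (t / 3) * ((⨆ i, x 0 i) - ⨅ i, x 0 i)) ∧
    Filter.Tendsto (fun t => (⨆ i, x t i) - ⨅ i, x t i) Filter.atTop (nhds 0) ∧
    ∃ c : ℝ, ∀ i, Filter.Tendsto (fun t => x t i) Filter.atTop (nhds c) := by
  haveI : Nonempty (Fin h) := ⟨⟨0, hh⟩⟩
  set S : ℕ → ℝ := fun t => ⨆ i, x t i with hSdef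
  set I : ℕ → ℝ := fun t => ⨅ i, x t i with hIdef
  -- step bounds
  have hstep : ∀ t i, I t ≤ x (t + 1) i ∧ x (t + 1) i ≤ S t := by
    intro t i
    rw [hx t]
    exact stoch_bounds (M t) (hnonneg t) (hrow t) (x t) i
  have hSanti : Antitone S := by
    refine antitone_nat_of_succ_le fun t => ciSup_le fun i => (hstep t i).2
  have hImono : Monotone I := by
    refine monotone_nat_of_le_succ fun t => le_ciInf fun i => (hstep t i).1
  have hIS : ∀ t, I t ≤ S t := fun t =>
    le_trans (ciInf_le (Finite.bddBelow_range _) (Classical.arbitrary (Fin h)))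
      (le_ciSup (Finite.bddAbove_range _) (Classical.arbitrary (Fin h)))
  have hdanti : Antitone (fun t => S t - I t) := fun a b hab =>
    sub_le_sub (hSanti hab) (hImono hab)
  -- product matrices
  have hprod : ∀ k : ℕ,
      x (3 * k + 3) = (M (3 * k + 2) * M (3 * k + 1) * M (3 * k)).mulVec (x (3 * k)) := by
    intro k
    have e : 3 * k + 3 = (3 * k + 2) + 1 := by omega
    rw [e, hx, show 3 * k + 2 = (3 * k + 1) + 1 by omega, hx, hx,
      Matrix.mulVec_mulVec, Matrix.mulVec_mulVec]
  have hPnn : ∀ k, ∀ i j, 0 ≤ (M (3 * k + 2) * M (3 * k + 1) * M (3 * k)) i j := by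
    intro k i j
    simp only [Matrix.mul_apply]
    apply Finset.sum_nonneg; intro a _
    apply mul_nonneg _ (hnonneg _ _ _)
    apply Finset.sum_nonneg; intro b _
    exact mul_nonneg (hnonneg _ _ _) (hnonneg _ _ _)
  have hmulrow : ∀ (A B : Matrix (Fin h) (Fin h) ℝ), (∀ i, ∑ j, A i j = 1) →
      (∀ i, ∑ j, B i j = 1) → ∀ i, ∑ j, (A * B) i j = 1 := by
    intro A B hA hB i
    simp only [Matrix.mul_apply]
    rw [Finset.sum_comm]
    simp [← Finset.mul_sum, hB, hA i]
  have hProw : ∀ k, ∀ i, ∑ j, (M (3 * k + 2) * M (3 * k + 1) * M (3 * k)) i j = 1 := by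
    intro k
    exact hmulrow _ _ (hmulrow _ _ (hrow _) (hrow _)) (hrow _)
  -- contraction every three steps
  have hcontr : ∀ k, S (3 * k + 3) - I (3 * k + 3) ≤ (1 - β) * (S (3 * k) - I (3 * k)) := by
    intro k
    obtain ⟨j, hj⟩ := hscram k
    have := scram_contract β hβ0 _ (hPnn k) (hProw k) j hj (x (3 * k))
    simpa [hSdef, hIdef, hprod k] using this
  have h1β : 0 ≤ 1 - β := by linarith
  have hd0 : 0 ≤ S 0 - I 0 := sub_nonneg.mpr (hIS 0)
  have hmain3 : ∀ q : ℕ, S (3 * q) - I (3 * q) ≤ (1 - β) ^ q * (S 0 - I 0) := by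
    intro q
    induction q with
    | zero => simp
    | succ q ih =>
      have : S (3 * (q + 1)) - I (3 * (q + 1)) ≤ (1 - β) * (S (3 * q) - I (3 * q)) := by
        have := hcontr q
        convert this using 3 <;> omega
      calc S (3 * (q + 1)) - I (3 * (q + 1)) ≤ (1 - β) * (S (3 * q) - I (3 * q)) := this
        _ ≤ (1 - β) * ((1 - β) ^ q * (S 0 - I 0)) := mul_le_mul_of_nonneg_left ih h1β
        _ = (1 - β) ^ (q + 1) * (S 0 - I 0) := by ring
  have hmain : ∀ t, S t - I t ≤ (1 - β) ^ (t / 3) * (S 0 - I 0) := by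
    intro t
    calc S t - I t ≤ S (3 * (t / 3)) - I (3 * (t / 3)) := hdanti (by omega)
      _ ≤ (1 - β) ^ (t / 3) * (S 0 - I 0) := hmain3 (t / 3)
  have hdiv : Tendsto (fun t : ℕ => t / 3) atTop atTop := by
    apply Filter.tendsto_atTop_atTop.mpr
    intro b
    exact ⟨3 * b, fun n hn => by omega⟩
  have hpow : Tendsto (fun q : ℕ => (1 - β) ^ q * (S 0 - I 0)) atTop (nhds 0) := by
    have := (tendsto_pow_atTop_nhds_zero_of_lt_one h1β (by linarith)).mul_const (S 0 - I 0)
    simpa using this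
  have hd0' : Tendsto (fun t => S t - I t) atTop (nhds 0) :=
    tendsto_of_tendsto_of_tendsto_of_le_of_le tendsto_const_nhds (hpow.comp hdiv)
      (fun t => sub_nonneg.mpr (hIS t)) hmain
  refine ⟨hmain, hd0', ?_⟩
  · -- common limit
    have hbdd : BddBelow (Set.range S) := by
      refine ⟨I 0, ?_⟩
      rintro _ ⟨t, rfl⟩
      exact le_trans (hImono (Nat.zero_le t)) (hIS t)
    have hSc : Tendsto S atTop (nhds (⨅ t, S t)) := tendsto_atTop_ciInf hSanti hbdd
    refine ⟨⨅ t, S t, fun i => ?_⟩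
    have hlo : Tendsto (fun t => S t - (S t - I t)) atTop (nhds (⨅ t, S t)) := by
      have := hSc.sub hd0'
      simpa using this
    apply tendsto_of_tendsto_of_tendsto_of_le_of_le hlo hSc
    · intro t
      have : I t ≤ x t i := ciInf_le (Finite.bddBelow_range (x t)) i
      simpa [sub_sub_cancel] using this
    · intro t
      exact le_ciSup (Finite.bddAbove_range (x t)) i
end
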